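/- Let g₁, g₂ ∈ 𝒞 (logarithms of polar radii of origin-centered ellipses). If there are φ₁, φ₂ with 0 < |φ₁ − φ₂| < π such that g₁(φ₁) = g₂(φ₁), g₁'(φ₁) = g₂'(φ₁), and g₁(φ₂) = g₂(φ₂), then g₁ = g₂. -/

import Mathlib

open Real

lemma ellipse_pos (a b c : ℝ) (ha : 0 < a) (h : b ^ 2 + c ^ 2 < a ^ 2) (θ : ℝ) :
    0 < a + b * cos θ + c * sin θ := by
  nlinarith [sin_sq_add_cos_sq θ, sq_nonneg (b * sin θ - c * cos θ),
    sq_nonneg (a + b * cos θ + c * sin θ), sq_nonneg (b * cos θ + c * sin θ - a)]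

lemma ellipse_hasDeriv (a b c φ : ℝ) (hpos : 0 < a + b * cos (2 * φ) + c * sin (2 * φ)) :
    HasDerivAt (fun φ => -(1 / 2) * log (a + b * cos (2 * φ) + c * sin (2 * φ)))
      (-(1 / 2) * ((-(2 * b) * sin (2 * φ) + 2 * c * cos (2 * φ)) /
        (a + b * cos (2 * φ) + c * sin (2 * φ)))) φ := by
  have hc : HasDerivAt (fun φ : ℝ => 2 * φ) 2 φ := by
    simpa using (hasDerivAt_id φ).const_mul 2
  have h1 : HasDerivAt (fun φ : ℝ => a + b * cos (2 * φ) + c * sin (2 * φ))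
      (-(2 * b) * sin (2 * φ) + 2 * c * cos (2 * φ)) φ := by
    have hcos := ((Real.hasDerivAt_cos (2 * φ)).comp φ hc).const_mul b
    have hsin := ((Real.hasDerivAt_sin (2 * φ)).comp φ hc).const_mul c
    have := (hcos.const_add a).add hsin
    refine this.congr_deriv ?_
    ring
  exact (h1.log hpos.ne').const_mul (-(1 / 2) : ℝ)

theorem log_ellipse_hermite (a₁ b₁ c₁ a₂ b₂ c₂ φ₁ φ₂ : ℝ)
    (hK₁ : 0 < a₁ ∧ b₁ ^ 2 + c₁ ^ 2 < a₁ ^ 2) (hK₂ : 0 < a₂ ∧ b₂ ^ 2 + c₂ ^ 2 < a₂ ^ 2)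
    (hφ : 0 < |φ₁ - φ₂| ∧ |φ₁ - φ₂| < π)
    (g₁ g₂ : ℝ → ℝ)
    (hg₁ : g₁ = fun φ => -(1 / 2) * log (a₁ + b₁ * cos (2 * φ) + c₁ * sin (2 * φ)))
    (hg₂ : g₂ = fun φ => -(1 / 2) * log (a₂ + b₂ * cos (2 * φ) + c₂ * sin (2 * φ)))
    (h1 : g₁ φ₁ = g₂ φ₁) (h1' : deriv g₁ φ₁ = deriv g₂ φ₁) (h2 : g₁ φ₂ = g₂ φ₂) :
    g₁ = g₂ := by
  obtain ⟨ha₁, hb₁⟩ := hK₁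
  obtain ⟨ha₂, hb₂⟩ := hK₂
  have p₁ := fun φ => ellipse_pos a₁ b₁ c₁ ha₁ hb₁ (2 * φ)
  have p₂ := fun φ => ellipse_pos a₂ b₂ c₂ ha₂ hb₂ (2 * φ)
  subst hg₁ hg₂
  have val : ∀ φ, (-(1 / 2 : ℝ)) * log (a₁ + b₁ * cos (2 * φ) + c₁ * sin (2 * φ)) =
      (-(1 / 2 : ℝ)) * log (a₂ + b₂ * cos (2 * φ) + c₂ * sin (2 * φ)) →
      a₁ + b₁ * cos (2 * φ) + c₁ * sin (2 * φ) = a₂ + b₂ * cos (2 * φ) + c₂ * sin (2 * φ) := by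
    intro φ h
    have hlog : log (a₁ + b₁ * cos (2 * φ) + c₁ * sin (2 * φ)) =
        log (a₂ + b₂ * cos (2 * φ) + c₂ * sin (2 * φ)) := by linarith
    calc a₁ + b₁ * cos (2 * φ) + c₁ * sin (2 * φ)
        = exp (log (a₁ + b₁ * cos (2 * φ) + c₁ * sin (2 * φ))) := (exp_log (p₁ φ)).symm
      _ = exp (log (a₂ + b₂ * cos (2 * φ) + c₂ * sin (2 * φ))) := by rw [hlog]
      _ = _ := exp_log (p₂ φ)
  have E1 := val φ₁ h1
  have E3 := val φ₂ h2
  have d₁ := (ellipse_hasDeriv a₁ b₁ c₁ φ₁ (p₁ φ₁)).deriv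
  have d₂ := (ellipse_hasDeriv a₂ b₂ c₂ φ₁ (p₂ φ₁)).deriv
  rw [d₁, d₂, E1] at h1'
  have hV := (p₂ φ₁).ne'
  have E2 : -(2 * b₁) * sin (2 * φ₁) + 2 * c₁ * cos (2 * φ₁) =
      -(2 * b₂) * sin (2 * φ₁) + 2 * c₂ * cos (2 * φ₁) := by
    rw [mul_right_inj' (by norm_num : (-(1 / 2) : ℝ) ≠ 0), div_left_inj' hV] at h1'
    linarith
  have py := sin_sq_add_cos_sq (2 * φ₁)
  have hb : b₁ - b₂ + (a₁ - a₂) * cos (2 * φ₁) = 0 := by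
    linear_combination cos (2 * φ₁) * E1 - (sin (2 * φ₁) / 2) * E2 - (b₁ - b₂) * py
  have hc : c₁ - c₂ + (a₁ - a₂) * sin (2 * φ₁) = 0 := by
    linear_combination sin (2 * φ₁) * E1 + (cos (2 * φ₁) / 2) * E2 - (c₁ - c₂) * py
  have hcs := cos_sub (2 * φ₁) (2 * φ₂)
  have key : (a₁ - a₂) * (1 - cos (2 * φ₁ - 2 * φ₂)) = 0 := by
    linear_combination E3 - cos (2 * φ₂) * hb - sin (2 * φ₂) * hc - (a₁ - a₂) * hcs
  have habs := abs_lt.mp hφ.2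
  have hne : cos (2 * φ₁ - 2 * φ₂) ≠ 1 := by
    intro h
    have h0 : 2 * φ₁ - 2 * φ₂ = 0 :=
      (Real.cos_eq_one_iff_of_lt_of_lt (by linarith [habs.1]) (by linarith [habs.2])).mp h
    have : φ₁ - φ₂ = 0 := by linarith
    rw [this, abs_zero] at hφ
    exact lt_irrefl 0 hφ.1
  have ha : a₁ = a₂ := by
    rcases mul_eq_zero.mp key with h | h
    · linarith
    · exact absurd (by linarith : cos (2 * φ₁ - 2 * φ₂) = 1) hne
  have hbb : b₁ = b₂ := by rw [ha] at hb; linarith [hb]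
  have hcc : c₁ = c₂ := by rw [ha] at hc; linarith [hc]
  funext φ
  rw [ha, hbb, hcc]
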